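/- Fix ξ ∈ ℝ. For every pair of smooth real-valued functions u, v : [0,∞) → ℝ which, together with all their derivatives, decay faster than any polynomial at infinity, one has ∫₀^∞ (C_ξ u)(t) v(t) dt = ∫₀^∞ u(t) (C_ξ v)(t) dt; that is, the operator C_ξ is symmetric on Schwartz functions on the half-line (no boundary conditions are required). -/

import Mathlib

open MeasureTheory

/-- The operator `C_ξ w = 2( t·(n₀w) − ξw − w' + t²(ξ−t)w )`, where
`(n₀w)(t) = −w''(t) + ((ξ−t)² + 1)w(t)`. -/
noncomputable def Cxi (ξ : ℝ) (w : ℝ → ℝ) (t : ℝ) : ℝ :=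
  2 * (t * (-(deriv (deriv w) t) + ((ξ - t) ^ 2 + 1) * w t)
    - ξ * w t - deriv w t + t ^ 2 * (ξ - t) * w t)

/-- Rapid decay on the half line. -/
def RapidDecay (f : ℝ → ℝ) : Prop :=
  ∀ k : ℕ, ∃ C : ℝ, ∀ t : ℝ, 0 ≤ t → |t| ^ k * |f t| ≤ C

lemma RapidDecay.nonnegC {f : ℝ → ℝ} {k : ℕ} {C : ℝ}
    (h : ∀ t : ℝ, 0 ≤ t → |t| ^ k * |f t| ≤ C) : 0 ≤ C :=
  le_trans (by positivity) (h 0 le_rfl)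

lemma RapidDecay.add {f g : ℝ → ℝ} (hf : RapidDecay f) (hg : RapidDecay g) :
    RapidDecay (fun t => f t + g t) := by
  intro k
  obtain ⟨C, hC⟩ := hf k
  obtain ⟨D, hD⟩ := hg k
  refine ⟨C + D, fun t ht => ?_⟩
  calc |t| ^ k * |f t + g t| ≤ |t| ^ k * (|f t| + |g t|) := by
        exact mul_le_mul_of_nonneg_left (abs_add_le _ _) (by positivity)
    _ = |t| ^ k * |f t| + |t| ^ k * |g t| := by ring
    _ ≤ C + D := add_le_add (hC t ht) (hD t ht)

lemma RapidDecay.cmul {f : ℝ → ℝ} (c : ℝ) (hf : RapidDecay f) :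
    RapidDecay (fun t => c * f t) := by
  intro k
  obtain ⟨C, hC⟩ := hf k
  refine ⟨|c| * C, fun t ht => ?_⟩
  calc |t| ^ k * |c * f t| = |c| * (|t| ^ k * |f t|) := by rw [abs_mul]; ring
    _ ≤ |c| * C := mul_le_mul_of_nonneg_left (hC t ht) (abs_nonneg c)

lemma RapidDecay.neg {f : ℝ → ℝ} (hf : RapidDecay f) :
    RapidDecay (fun t => -f t) := by
  have := hf.cmul (-1)
  simpa using this

lemma RapidDecay.tmul {f : ℝ → ℝ} (hf : RapidDecay f) :
    RapidDecay (fun t => t * f t) := by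
  intro k
  obtain ⟨C, hC⟩ := hf (k + 1)
  refine ⟨C, fun t ht => ?_⟩
  calc |t| ^ k * |t * f t| = |t| ^ (k + 1) * |f t| := by
        rw [abs_mul, pow_succ]; ring
    _ ≤ C := hC t ht

lemma RapidDecay.mul {f g : ℝ → ℝ} (hf : RapidDecay f) (hg : RapidDecay g) :
    RapidDecay (fun t => f t * g t) := by
  intro k
  obtain ⟨C, hC⟩ := hf k
  obtain ⟨D, hD⟩ := hg 0
  refine ⟨C * D, fun t ht => ?_⟩
  have h1 : |g t| ≤ D := by simpa using hD t ht
  calc |t| ^ k * |f t * g t| = (|t| ^ k * |f t|) * |g t| := by rw [abs_mul]; ring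
    _ ≤ C * D := mul_le_mul (hC t ht) h1 (abs_nonneg _) (RapidDecay.nonnegC hC)

lemma integrableOn_of_rapidDecay {f : ℝ → ℝ} (hc : Continuous f) (hf : RapidDecay f) :
    IntegrableOn f (Set.Ioi (0 : ℝ)) := by
  have h1 : IntegrableOn f (Set.Ioc (0 : ℝ) 1) := hc.integrableOn_Ioc
  obtain ⟨C, hC⟩ := hf 2
  have h2 : IntegrableOn f (Set.Ioi (1 : ℝ)) := by
    have hint : IntegrableOn (fun t : ℝ => C * t ^ (-2 : ℝ)) (Set.Ioi (1 : ℝ)) :=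
      (integrableOn_Ioi_rpow_of_lt (by norm_num) one_pos).const_mul C
    apply hint.mono' (hc.aestronglyMeasurable.restrict)
    filter_upwards [ae_restrict_mem measurableSet_Ioi] with t ht
    have ht1 : (1 : ℝ) < t := ht
    have ht0 : (0 : ℝ) < t := lt_trans one_pos ht1
    have habs : |t| = t := abs_of_pos ht0
    have hb : t ^ 2 * |f t| ≤ C := by
      have := hC t ht0.le
      rwa [habs] at this
    have hrp : t ^ (-2 : ℝ) = (t ^ 2)⁻¹ := by
      rw [Real.rpow_neg ht0.le, Real.rpow_two]
    rw [Real.norm_eq_abs, hrp]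
    rw [← sub_nonneg] at hb ⊢
    have hpos : (0:ℝ) < t ^ 2 := by positivity
    have : C * (t ^ 2)⁻¹ - |f t| = (C - t ^ 2 * |f t|) * (t ^ 2)⁻¹ := by
      field_simp
    rw [this]
    positivity
  rw [← Set.Ioc_union_Ioi_eq_Ioi (zero_le_one (α := ℝ))]
  exact h1.union h2

lemma rapidDecay_Cxi (ξ : ℝ) (w : ℝ → ℝ)
    (hwd : ∀ n k : ℕ, ∃ C : ℝ, ∀ t : ℝ, 0 ≤ t → |t| ^ k * |iteratedDeriv n w t| ≤ C) :
    RapidDecay (Cxi ξ w) := by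
  have h0 : RapidDecay w := by
    have := hwd 0
    simpa [RapidDecay, iteratedDeriv_zero] using this
  have h1 : RapidDecay (deriv w) := by
    have := hwd 1
    simpa [RapidDecay, iteratedDeriv_one] using this
  have h2 : RapidDecay (deriv (deriv w)) := by
    have := hwd 2
    simpa [RapidDecay, iteratedDeriv_succ, iteratedDeriv_zero] using this
  have key : Cxi ξ w = fun t =>
      2 * ((ξ ^ 2 + 1) * (t * w t) + (-ξ) * (t * (t * w t)) + ((-ξ) * w t +
        (-(deriv w t) + t * (-(deriv (deriv w) t))))) := by
    funext t
    simp only [Cxi]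
    ring
  rw [key]
  exact (((h0.tmul.cmul (ξ^2+1)).add ((h0.tmul.tmul).cmul (-ξ))).add
    ((h0.cmul (-ξ)).add (h1.neg.add h2.neg.tmul))).cmul 2

lemma continuous_Cxi (ξ : ℝ) (w : ℝ → ℝ) (hw : ContDiff ℝ (⊤ : ℕ∞) w) :
    Continuous (Cxi ξ w) := by
  have hw0 : Continuous w := hw.continuous
  have hw' : ContDiff ℝ (⊤ : ℕ∞) (deriv w) := (contDiff_infty_iff_deriv.mp hw).2
  have hw1 : Continuous (deriv w) := hw'.continuous
  have hw2 : Continuous (deriv (deriv w)) := (contDiff_infty_iff_deriv.mp hw').2.continuous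
  unfold Cxi
  fun_prop

/-- `C_ξ` is symmetric on Schwartz functions on the half-line:
`∫₀^∞ (C_ξ u) v dt = ∫₀^∞ u (C_ξ v) dt`. -/
theorem Cxi_symmetric
    (ξ : ℝ) (u v : ℝ → ℝ)
    (hu : ContDiff ℝ (⊤ : ℕ∞) u) (hv : ContDiff ℝ (⊤ : ℕ∞) v)
    (hud : ∀ n k : ℕ, ∃ C : ℝ, ∀ t : ℝ, 0 ≤ t → |t| ^ k * |iteratedDeriv n u t| ≤ C)
    (hvd : ∀ n k : ℕ, ∃ C : ℝ, ∀ t : ℝ, 0 ≤ t → |t| ^ k * |iteratedDeriv n v t| ≤ C) :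
    ∫ t in Set.Ioi (0 : ℝ), Cxi ξ u t * v t
      = ∫ t in Set.Ioi (0 : ℝ), u t * Cxi ξ v t := by
  -- decay of the basic functions
  have hDu : RapidDecay u := by simpa [RapidDecay, iteratedDeriv_zero] using hud 0
  have hDv : RapidDecay v := by simpa [RapidDecay, iteratedDeriv_zero] using hvd 0
  have hDu1 : RapidDecay (deriv u) := by simpa [RapidDecay, iteratedDeriv_one] using hud 1
  have hDv1 : RapidDecay (deriv v) := by simpa [RapidDecay, iteratedDeriv_one] using hvd 1
  -- continuity facts
  have hcu : Continuous u := hu.continuous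
  have hcv : Continuous v := hv.continuous
  have hu' : ContDiff ℝ (⊤ : ℕ∞) (deriv u) := (contDiff_infty_iff_deriv.mp hu).2
  have hv' : ContDiff ℝ (⊤ : ℕ∞) (deriv v) := (contDiff_infty_iff_deriv.mp hv).2
  have hcu1 : Continuous (deriv u) := hu'.continuous
  have hcv1 : Continuous (deriv v) := hv'.continuous
  -- integrability of both integrands
  have hint1 : IntegrableOn (fun t => Cxi ξ u t * v t) (Set.Ioi (0 : ℝ)) :=
    integrableOn_of_rapidDecay (by have := continuous_Cxi ξ u hu; fun_prop)
      ((rapidDecay_Cxi ξ u hud).mul hDv)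
  have hint2 : IntegrableOn (fun t => u t * Cxi ξ v t) (Set.Ioi (0 : ℝ)) :=
    integrableOn_of_rapidDecay (by have := continuous_Cxi ξ v hv; fun_prop)
      (hDu.mul (rapidDecay_Cxi ξ v hvd))
  -- the antiderivative of the difference
  set F : ℝ → ℝ := fun t => -2 * (t * (deriv u t * v t - u t * deriv v t)) with hF
  have hderiv : ∀ t : ℝ,
      HasDerivAt F (Cxi ξ u t * v t - u t * Cxi ξ v t) t := by
    intro t
    have h1u : HasDerivAt u (deriv u t) t := (hu.differentiable (by simp) t).hasDerivAt
    have h1v : HasDerivAt v (deriv v t) t := (hv.differentiable (by simp) t).hasDerivAt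
    have h2u : HasDerivAt (deriv u) (deriv (deriv u) t) t :=
      (hu'.differentiable (by simp) t).hasDerivAt
    have h2v : HasDerivAt (deriv v) (deriv (deriv v) t) t :=
      (hv'.differentiable (by simp) t).hasDerivAt
    have hG : HasDerivAt (fun t => t * (deriv u t * v t - u t * deriv v t))
        (1 * (deriv u t * v t - u t * deriv v t) +
          t * ((deriv (deriv u) t * v t + deriv u t * deriv v t) -
            (deriv u t * deriv v t + u t * deriv (deriv v) t))) t :=
      (hasDerivAt_id t).mul ((h2u.mul h1v).sub (h1u.mul h2v))
    have := hG.const_mul (-2 : ℝ)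
    refine this.congr_deriv ?_
    simp only [Cxi]
    ring
  have hcont : ContinuousWithinAt F (Set.Ici (0 : ℝ)) 0 := by
    have : Continuous F := by fun_prop
    exact this.continuousWithinAt
  have hDF : RapidDecay F :=
    (((hDu1.mul hDv).add ((hDu.mul hDv1).neg)).tmul).cmul (-2)
  have htend : Filter.Tendsto F Filter.atTop (nhds 0) := by
    obtain ⟨C, hC⟩ := hDF 1
    apply squeeze_zero_norm' (a := fun t : ℝ => C * t⁻¹)
    · filter_upwards [Filter.eventually_ge_atTop (1 : ℝ)] with t ht
      have ht0 : (0 : ℝ) < t := lt_of_lt_of_le one_pos ht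
      have := hC t ht0.le
      rw [pow_one, abs_of_pos ht0] at this
      rw [Real.norm_eq_abs]
      rw [← sub_nonneg] at this ⊢
      have heq : C * t⁻¹ - |F t| = (C - t * |F t|) * t⁻¹ := by field_simp
      rw [heq]
      positivity
    · simpa using tendsto_inv_atTop_zero.const_mul C
  have hintdiff : IntegrableOn (fun t => Cxi ξ u t * v t - u t * Cxi ξ v t)
      (Set.Ioi (0 : ℝ)) := hint1.sub hint2
  have key : ∫ t in Set.Ioi (0 : ℝ), (Cxi ξ u t * v t - u t * Cxi ξ v t) = 0 := by
    have := integral_Ioi_of_hasDerivAt_of_tendsto hcont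
      (fun x _ => hderiv x) hintdiff htend
    simpa [hF] using this
  have := integral_sub hint1 hint2
  rw [key] at this
  linarith [this]
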